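/- Let (X,d) be a path connected compact metric space with base point ξ, and define the product metric on X × S¹ by dist((x,t),(y,s)) = √(d(x,y)² + |t−s|²), where S¹ ⊂ ℂ carries the metric from ℂ. Then L(X×S¹, (ξ,1)) ≤ √(L(X,ξ)² + π²), where L(Y,η) denotes the supremum over points y ∈ Y of the infimum of lengths of continuous paths in Y from η to y. -/

import Mathlib

open scoped ENNReal

/-- The infimum of the lengths (total variations) of continuous paths in `X` from `x` to `y`. -/
noncomputable def pathEDist {X : Type*} [PseudoEMetricSpace X] (x y : X) : ℝ≥0∞ :=
  ⨅ γ ∈ {γ : ℝ → X | ContinuousOn γ (Set.Icc 0 1) ∧ γ 0 = x ∧ γ 1 = y},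
    eVariationOn γ (Set.Icc 0 1)

open Set


lemma evar_right {X : Type*} [MetricSpace X] {γ : ℝ → X} {c d : ℝ}
    (hγ : ContinuousOn γ (Icc c d)) (hfin : eVariationOn γ (Icc c d) ≠ ⊤)
    {x : ℝ} (hx : x ∈ Ico c d) {ε : ℝ} (hε : 0 < ε) :
    ∃ t ∈ Ioc x d, eVariationOn γ (Icc x t) ≤ ENNReal.ofReal ε := by
  have hxc : c ≤ x := hx.1
  have hxd : x < d := hx.2
  set M := eVariationOn γ (Icc x d) with hM
  have hMfin : M ≠ ⊤ := by
    refine ne_top_of_le_ne_top hfin (eVariationOn.mono γ ?_)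
    exact Icc_subset_Icc hxc le_rfl
  by_cases hM0 : M ≤ ENNReal.ofReal ε
  · exact ⟨d, ⟨hxd, le_rfl⟩, le_trans (eVariationOn.mono γ (Icc_subset_Icc le_rfl le_rfl)) hM0⟩
  push_neg at hM0
  have hεhalf : (0:ℝ) < ε/2 := by linarith
  have hlt : M - ENNReal.ofReal (ε/2) < M := by
    refine ENNReal.sub_lt_self hMfin ?_ ?_
    · intro h; rw [h] at hM0; simp at hM0
    · simp [hεhalf]
  obtain ⟨⟨n, ⟨u, hu, us⟩⟩, hS⟩ : ∃ p : ℕ × {u : ℕ → ℝ // Monotone u ∧ ∀ i, u i ∈ Icc x d},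
      M - ENNReal.ofReal (ε/2) < ∑ i ∈ Finset.range p.1, edist (γ (p.2.1 (i+1))) (γ (p.2.1 i)) := by
    rw [← lt_iSup_iff]
    exact hlt.trans_le (le_of_eq rfl)
  set S := ∑ i ∈ Finset.range n, edist (γ (u (i+1))) (γ (u i)) with hSdef
  have hMS : M ≤ S + ENNReal.ofReal (ε/2) := tsub_le_iff_right.mp hS.le
  -- the set of partition points strictly greater than x
  set T : Finset ℝ := ((Finset.range (n+1)).filter (fun i => x < u i)).image u with hT
  by_cases hTe : T = ∅
  · -- all partition points equal x, so S = 0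
    have hux : ∀ i ≤ n, u i = x := by
      intro i hi
      have : ¬ x < u i := by
        intro h
        have : u i ∈ T := Finset.mem_image.mpr ⟨i, Finset.mem_filter.mpr ⟨Finset.mem_range.mpr (by omega), h⟩, rfl⟩
        simp [hTe] at this
      exact le_antisymm (not_lt.mp this) (us i).1
    have hS0 : S = 0 := by
      apply Finset.sum_eq_zero
      intro i hi
      rw [Finset.mem_range] at hi
      rw [hux i (by omega), hux (i+1) (by omega)]
      simp
    refine ⟨d, ⟨hxd, le_rfl⟩, ?_⟩
    calc eVariationOn γ (Icc x d) = M := rfl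
      _ ≤ S + ENNReal.ofReal (ε/2) := hMS
      _ = ENNReal.ofReal (ε/2) := by rw [hS0, zero_add]
      _ ≤ ENNReal.ofReal ε := ENNReal.ofReal_le_ofReal (by linarith)
  · have hTne : T.Nonempty := Finset.nonempty_of_ne_empty hTe
    set m := T.min' hTne with hm
    have hmT : m ∈ T := T.min'_mem hTne
    obtain ⟨i₀, hi₀, hmu⟩ := Finset.mem_image.mp hmT
    have hxm : x < m := by rw [← hmu]; exact (Finset.mem_filter.mp hi₀).2
    have hmd : m ≤ d := by rw [← hmu]; exact (us i₀).2
    -- continuity at x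
    have hcx : ContinuousWithinAt γ (Icc c d) x := hγ x ⟨hxc, hxd.le⟩
    rw [Metric.continuousWithinAt_iff] at hcx
    have hεn : (0:ℝ) < ε/(2*(n+1)) := by positivity
    obtain ⟨δ, hδ, hδp⟩ := hcx _ hεn
    set t := min (x + δ/2) m with ht
    have hxt : x < t := lt_min (by linarith) hxm
    have htm : t ≤ m := min_le_right _ _
    have htd : t ≤ d := htm.trans hmd
    have htIcc : t ∈ Icc c d := ⟨hxc.trans hxt.le, htd⟩
    have hdistt : dist (γ t) (γ x) < ε/(2*(n+1)) := by
      apply hδp htIcc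
      rw [Real.dist_eq, abs_of_nonneg (by linarith)]
      have : t ≤ x + δ/2 := min_le_left _ _
      linarith
    set e := edist (γ t) (γ x) with he
    have hee : e ≤ ENNReal.ofReal (ε/(2*(n+1))) := by
      rw [he, edist_dist]
      exact ENNReal.ofReal_le_ofReal hdistt.le
    -- clipped partition
    set v : ℕ → ℝ := fun i => max (u i) t with hv
    have hvmono : Monotone v := fun a b hab => max_le_max (hu hab) le_rfl
    have hvs : ∀ i, v i ∈ Icc t d := fun i => ⟨le_max_right _ _, max_le (us i).2 htd⟩
    -- key per-term bound
    have hterm : ∀ i < n, edist (γ (u (i+1))) (γ (u i)) ≤ edist (γ (v (i+1))) (γ (v i)) + e := by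
      intro i hi
      rcases le_or_gt t (u i) with h1 | h1
      · have h2 : t ≤ u (i+1) := h1.trans (hu (by omega))
        have : v i = u i := max_eq_left h1
        have h3 : v (i+1) = u (i+1) := max_eq_left h2
        rw [this, h3]
        exact le_self_add
      · -- u i < t hence u i = x
        have huix : u i = x := by
          by_contra hne
          have hxlt : x < u i := lt_of_le_of_ne (us i).1 (Ne.symm hne)
          have : u i ∈ T := Finset.mem_image.mpr ⟨i, Finset.mem_filter.mpr ⟨Finset.mem_range.mpr (by omega), hxlt⟩, rfl⟩
          have := T.min'_le _ this
          rw [← hm] at this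
          have : m ≤ u i := this
          linarith [htm.trans this]
        have hvi : v i = t := max_eq_right h1.le
        rcases le_or_gt t (u (i+1)) with h2 | h2
        · have hvi1 : v (i+1) = u (i+1) := max_eq_left h2
          rw [hvi, hvi1, huix]
          calc edist (γ (u (i+1))) (γ x) ≤ edist (γ (u (i+1))) (γ t) + edist (γ t) (γ x) := edist_triangle _ _ _
            _ = edist (γ (u (i+1))) (γ t) + e := rfl
        · have hui1x : u (i+1) = x := by
            by_contra hne
            have hxlt : x < u (i+1) := lt_of_le_of_ne (us (i+1)).1 (Ne.symm hne)
            have : u (i+1) ∈ T := Finset.mem_image.mpr ⟨i+1, Finset.mem_filter.mpr ⟨Finset.mem_range.mpr (by omega), hxlt⟩, rfl⟩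
            have := T.min'_le _ this
            rw [← hm] at this
            linarith [htm.trans this]
          rw [huix, hui1x]
          simp
    -- sum bound
    have hsum : S ≤ eVariationOn γ (Icc t d) + (n : ℝ≥0∞) * e := by
      calc S ≤ ∑ i ∈ Finset.range n, (edist (γ (v (i+1))) (γ (v i)) + e) := by
              apply Finset.sum_le_sum
              intro i hi
              exact hterm i (Finset.mem_range.mp hi)
        _ = (∑ i ∈ Finset.range n, edist (γ (v (i+1))) (γ (v i))) + (n : ℝ≥0∞) * e := by
              rw [Finset.sum_add_distrib, Finset.sum_const, Finset.card_range, nsmul_eq_mul]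
        _ ≤ eVariationOn γ (Icc t d) + (n : ℝ≥0∞) * e := by
              gcongr
              exact eVariationOn.sum_le (f := γ) hvmono hvs
    have hne : (n : ℝ≥0∞) * e ≤ ENNReal.ofReal (ε/2) := by
      calc (n : ℝ≥0∞) * e ≤ (n : ℝ≥0∞) * ENNReal.ofReal (ε/(2*(n+1))) := by gcongr
        _ = ENNReal.ofReal (n * (ε/(2*(n+1)))) := by
              rw [ENNReal.ofReal_mul (by positivity)]
              simp [ENNReal.ofReal_natCast]
        _ ≤ ENNReal.ofReal (ε/2) := by
              apply ENNReal.ofReal_le_ofReal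
              rw [mul_comm, div_mul_eq_mul_div, div_le_div_iff₀ (by positivity) (by norm_num : (0:ℝ) < 2)]
              nlinarith [Nat.cast_nonneg (α := ℝ) n, hε]
    -- conclude
    have hsplit : eVariationOn γ (Icc x t) + eVariationOn γ (Icc t d) = M := by
      have := eVariationOn.Icc_add_Icc γ (le_of_lt hxt) htd ⟨hxt.le, htd⟩ (s := Icc x d)
      simpa [Icc_inter_Icc, max_eq_left hxt.le, min_eq_left htd,
        max_eq_left (le_refl x), min_eq_left (le_refl d), hxt.le, htd] using this
    have hfin2 : eVariationOn γ (Icc t d) ≠ ⊤ := by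
      refine ne_top_of_le_ne_top hMfin (eVariationOn.mono γ (Icc_subset_Icc hxt.le le_rfl))
    have : eVariationOn γ (Icc x t) + eVariationOn γ (Icc t d)
        ≤ eVariationOn γ (Icc t d) + ENNReal.ofReal ε := by
      rw [hsplit]
      calc M ≤ S + ENNReal.ofReal (ε/2) := hMS
        _ ≤ (eVariationOn γ (Icc t d) + (n : ℝ≥0∞) * e) + ENNReal.ofReal (ε/2) := by gcongr
        _ ≤ (eVariationOn γ (Icc t d) + ENNReal.ofReal (ε/2)) + ENNReal.ofReal (ε/2) := by gcongr
        _ = eVariationOn γ (Icc t d) + ENNReal.ofReal ε := by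
            rw [add_assoc, ← ENNReal.ofReal_add (by linarith) (by linarith)]
            norm_num
    refine ⟨t, ⟨hxt, htd⟩, ?_⟩
    rw [add_comm (eVariationOn γ (Icc x t))] at this
    exact (ENNReal.add_le_add_iff_left hfin2).mp this


lemma evar_left {X : Type*} [MetricSpace X] {γ : ℝ → X} {c d : ℝ}
    (hγ : ContinuousOn γ (Icc c d)) (hfin : eVariationOn γ (Icc c d) ≠ ⊤)
    {x : ℝ} (hx : x ∈ Ioc c d) {ε : ℝ} (hε : 0 < ε) :
    ∃ t ∈ Ico c x, eVariationOn γ (Icc t x) ≤ ENNReal.ofReal ε := by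
  have hxc : c < x := hx.1
  have hxd : x ≤ d := hx.2
  set M := eVariationOn γ (Icc c x) with hM
  have hMfin : M ≠ ⊤ := by
    refine ne_top_of_le_ne_top hfin (eVariationOn.mono γ ?_)
    exact Icc_subset_Icc le_rfl hxd
  by_cases hM0 : M ≤ ENNReal.ofReal ε
  · exact ⟨c, ⟨le_rfl, hxc⟩, hM0⟩
  push_neg at hM0
  have hεhalf : (0:ℝ) < ε/2 := by linarith
  have hlt : M - ENNReal.ofReal (ε/2) < M := by
    refine ENNReal.sub_lt_self hMfin ?_ ?_
    · intro h; rw [h] at hM0; simp at hM0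
    · simp [hεhalf]
  obtain ⟨⟨n, ⟨u, hu, us⟩⟩, hS⟩ : ∃ p : ℕ × {u : ℕ → ℝ // Monotone u ∧ ∀ i, u i ∈ Icc c x},
      M - ENNReal.ofReal (ε/2) < ∑ i ∈ Finset.range p.1, edist (γ (p.2.1 (i+1))) (γ (p.2.1 i)) := by
    rw [← lt_iSup_iff]
    exact hlt.trans_le (le_of_eq rfl)
  set S := ∑ i ∈ Finset.range n, edist (γ (u (i+1))) (γ (u i)) with hSdef
  have hMS : M ≤ S + ENNReal.ofReal (ε/2) := tsub_le_iff_right.mp hS.le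
  set T : Finset ℝ := ((Finset.range (n+1)).filter (fun i => u i < x)).image u with hT
  by_cases hTe : T = ∅
  · have hux : ∀ i ≤ n, u i = x := by
      intro i hi
      have : ¬ u i < x := by
        intro h
        have : u i ∈ T := Finset.mem_image.mpr ⟨i, Finset.mem_filter.mpr ⟨Finset.mem_range.mpr (by omega), h⟩, rfl⟩
        simp [hTe] at this
      exact le_antisymm (us i).2 (not_lt.mp this)
    have hS0 : S = 0 := by
      apply Finset.sum_eq_zero
      intro i hi
      rw [Finset.mem_range] at hi
      rw [hux i (by omega), hux (i+1) (by omega)]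
      simp
    refine ⟨c, ⟨le_rfl, hxc⟩, ?_⟩
    calc eVariationOn γ (Icc c x) = M := rfl
      _ ≤ S + ENNReal.ofReal (ε/2) := hMS
      _ = ENNReal.ofReal (ε/2) := by rw [hS0, zero_add]
      _ ≤ ENNReal.ofReal ε := ENNReal.ofReal_le_ofReal (by linarith)
  · have hTne : T.Nonempty := Finset.nonempty_of_ne_empty hTe
    set m := T.max' hTne with hm
    have hmT : m ∈ T := T.max'_mem hTne
    obtain ⟨i₀, hi₀, hmu⟩ := Finset.mem_image.mp hmT
    have hxm : m < x := by rw [← hmu]; exact (Finset.mem_filter.mp hi₀).2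
    have hmc : c ≤ m := by rw [← hmu]; exact (us i₀).1
    have hcx : ContinuousWithinAt γ (Icc c d) x := hγ x ⟨hxc.le, hxd⟩
    rw [Metric.continuousWithinAt_iff] at hcx
    have hεn : (0:ℝ) < ε/(2*(n+1)) := by positivity
    obtain ⟨δ, hδ, hδp⟩ := hcx _ hεn
    set t := max (x - δ/2) m with ht
    have hxt : t < x := max_lt (by linarith) hxm
    have htm : m ≤ t := le_max_right _ _
    have htc : c ≤ t := hmc.trans htm
    have htIcc : t ∈ Icc c d := ⟨htc, hxt.le.trans hxd⟩
    have hdistt : dist (γ t) (γ x) < ε/(2*(n+1)) := by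
      apply hδp htIcc
      rw [Real.dist_eq, abs_of_nonpos (by linarith)]
      have : x - δ/2 ≤ t := le_max_left _ _
      linarith
    set e := edist (γ t) (γ x) with he
    have hee : e ≤ ENNReal.ofReal (ε/(2*(n+1))) := by
      rw [he, edist_dist]
      exact ENNReal.ofReal_le_ofReal hdistt.le
    set v : ℕ → ℝ := fun i => min (u i) t with hv
    have hvmono : Monotone v := fun a b hab => min_le_min (hu hab) le_rfl
    have hvs : ∀ i, v i ∈ Icc c t := fun i => ⟨le_min (us i).1 htc, min_le_right _ _⟩
    have hterm : ∀ i < n, edist (γ (u (i+1))) (γ (u i)) ≤ edist (γ (v (i+1))) (γ (v i)) + e := by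
      intro i hi
      rcases le_or_gt (u (i+1)) t with h1 | h1
      · have h2 : u i ≤ t := (hu (by omega : i ≤ i+1)).trans h1
        have hv1 : v (i+1) = u (i+1) := min_eq_left h1
        have hv2 : v i = u i := min_eq_left h2
        rw [hv1, hv2]
        exact le_self_add
      · have hui1x : u (i+1) = x := by
          by_contra hne
          have hlt' : u (i+1) < x := lt_of_le_of_ne (us (i+1)).2 hne
          have : u (i+1) ∈ T := Finset.mem_image.mpr ⟨i+1, Finset.mem_filter.mpr ⟨Finset.mem_range.mpr (by omega), hlt'⟩, rfl⟩
          have := T.le_max' _ this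
          rw [← hm] at this
          linarith [this.trans htm]
        have hvi1 : v (i+1) = t := min_eq_right h1.le
        rcases le_or_gt (u i) t with h2 | h2
        · have hvi : v i = u i := min_eq_left h2
          rw [hvi, hvi1, hui1x]
          calc edist (γ x) (γ (u i)) ≤ edist (γ x) (γ t) + edist (γ t) (γ (u i)) := edist_triangle _ _ _
            _ = edist (γ t) (γ (u i)) + e := by rw [edist_comm (γ x) (γ t)]; ring
        · have huix : u i = x := by
            by_contra hne
            have hlt' : u i < x := lt_of_le_of_ne (us i).2 hne
            have : u i ∈ T := Finset.mem_image.mpr ⟨i, Finset.mem_filter.mpr ⟨Finset.mem_range.mpr (by omega), hlt'⟩, rfl⟩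
            have := T.le_max' _ this
            rw [← hm] at this
            linarith [this.trans htm]
          rw [huix, hui1x]
          simp
    have hsum : S ≤ eVariationOn γ (Icc c t) + (n : ℝ≥0∞) * e := by
      calc S ≤ ∑ i ∈ Finset.range n, (edist (γ (v (i+1))) (γ (v i)) + e) := by
              apply Finset.sum_le_sum
              intro i hi
              exact hterm i (Finset.mem_range.mp hi)
        _ = (∑ i ∈ Finset.range n, edist (γ (v (i+1))) (γ (v i))) + (n : ℝ≥0∞) * e := by
              rw [Finset.sum_add_distrib, Finset.sum_const, Finset.card_range, nsmul_eq_mul]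
        _ ≤ eVariationOn γ (Icc c t) + (n : ℝ≥0∞) * e := by
              gcongr
              exact eVariationOn.sum_le (f := γ) hvmono hvs
    have hne : (n : ℝ≥0∞) * e ≤ ENNReal.ofReal (ε/2) := by
      calc (n : ℝ≥0∞) * e ≤ (n : ℝ≥0∞) * ENNReal.ofReal (ε/(2*(n+1))) := by gcongr
        _ = ENNReal.ofReal (n * (ε/(2*(n+1)))) := by
              rw [ENNReal.ofReal_mul (by positivity)]
              simp [ENNReal.ofReal_natCast]
        _ ≤ ENNReal.ofReal (ε/2) := by
              apply ENNReal.ofReal_le_ofReal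
              rw [mul_comm, div_mul_eq_mul_div, div_le_div_iff₀ (by positivity) (by norm_num : (0:ℝ) < 2)]
              nlinarith [Nat.cast_nonneg (α := ℝ) n, hε]
    have hsplit : eVariationOn γ (Icc c t) + eVariationOn γ (Icc t x) = M := by
      have := eVariationOn.Icc_add_Icc γ htc hxt.le ⟨htc, hxt.le⟩ (s := Icc c x)
      simpa [Icc_inter_Icc, max_eq_left (le_refl c),
        min_eq_left hxt.le, min_eq_left (le_refl x), max_eq_right htc, htc, hxt.le] using this
    have hfin2 : eVariationOn γ (Icc c t) ≠ ⊤ :=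
      ne_top_of_le_ne_top hMfin (eVariationOn.mono γ (Icc_subset_Icc le_rfl hxt.le))
    have : eVariationOn γ (Icc c t) + eVariationOn γ (Icc t x)
        ≤ eVariationOn γ (Icc c t) + ENNReal.ofReal ε := by
      rw [hsplit]
      calc M ≤ S + ENNReal.ofReal (ε/2) := hMS
        _ ≤ (eVariationOn γ (Icc c t) + (n : ℝ≥0∞) * e) + ENNReal.ofReal (ε/2) := by gcongr
        _ ≤ (eVariationOn γ (Icc c t) + ENNReal.ofReal (ε/2)) + ENNReal.ofReal (ε/2) := by gcongr
        _ = eVariationOn γ (Icc c t) + ENNReal.ofReal ε := by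
            rw [add_assoc, ← ENNReal.ofReal_add (by linarith) (by linarith)]
            norm_num
    refine ⟨t, ⟨htc, hxt⟩, ?_⟩
    exact (ENNReal.add_le_add_iff_left hfin2).mp this

lemma evar_split {X : Type*} [MetricSpace X] (γ : ℝ → X) {a b : ℝ}
    (h0 : (0:ℝ) ≤ a) (hab : a ≤ b) (hb1 : b ≤ 1) :
    eVariationOn γ (Icc 0 a) + eVariationOn γ (Icc a b) = eVariationOn γ (Icc 0 b) := by
  have := eVariationOn.Icc_add_Icc γ (s := Icc 0 1) h0 hab ⟨h0, hab.trans hb1⟩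
  simpa [Icc_inter_Icc, max_eq_left h0, max_eq_right h0,
    min_eq_right (hab.trans hb1), min_eq_right hb1, min_eq_left, le_refl] using this

lemma evar_diff {X : Type*} [MetricSpace X] {γ : ℝ → X}
    (hfin : eVariationOn γ (Icc 0 1) ≠ ⊤) {a b : ℝ}
    (h0 : (0:ℝ) ≤ a) (hab : a ≤ b) (hb1 : b ≤ 1) :
    (eVariationOn γ (Icc 0 b)).toReal =
      (eVariationOn γ (Icc 0 a)).toReal + (eVariationOn γ (Icc a b)).toReal := by
  have hf1 : eVariationOn γ (Icc 0 a) ≠ ⊤ :=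
    ne_top_of_le_ne_top hfin (eVariationOn.mono γ (Icc_subset_Icc le_rfl (hab.trans hb1)))
  have hf2 : eVariationOn γ (Icc a b) ≠ ⊤ :=
    ne_top_of_le_ne_top hfin (eVariationOn.mono γ (Icc_subset_Icc h0 hb1))
  rw [← evar_split γ h0 hab hb1, ENNReal.toReal_add hf1 hf2]

lemma continuousOn_evar_toReal {X : Type*} [MetricSpace X] {γ : ℝ → X}
    (hγ : ContinuousOn γ (Icc 0 1)) (hfin : eVariationOn γ (Icc 0 1) ≠ ⊤) :
    ContinuousOn (fun t => (eVariationOn γ (Icc 0 t)).toReal) (Icc 0 1) := by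
  set h : ℝ → ℝ := fun t => (eVariationOn γ (Icc 0 t)).toReal with hh
  intro x hx
  rw [Metric.continuousWithinAt_iff]
  intro ε hε
  have hε2 : (0:ℝ) < ε/2 := by linarith
  -- right bound
  obtain ⟨δ₁, hδ₁, hR⟩ : ∃ δ₁ > 0, ∀ t ∈ Icc (0:ℝ) 1, x ≤ t → t - x < δ₁ →
      (eVariationOn γ (Icc x t)).toReal ≤ ε/2 := by
    rcases lt_or_ge x 1 with hx1 | hx1
    · obtain ⟨tp, htp, hv⟩ := evar_right hγ hfin ⟨hx.1, hx1⟩ hε2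
      refine ⟨tp - x, by linarith [htp.1], fun t ht hxt htδ => ?_⟩
      have : eVariationOn γ (Icc x t) ≤ ENNReal.ofReal (ε/2) :=
        le_trans (eVariationOn.mono γ (Icc_subset_Icc le_rfl (by linarith))) hv
      calc (eVariationOn γ (Icc x t)).toReal
          ≤ (ENNReal.ofReal (ε/2)).toReal := ENNReal.toReal_mono ENNReal.ofReal_ne_top this
        _ = ε/2 := ENNReal.toReal_ofReal hε2.le
    · refine ⟨1, one_pos, fun t ht hxt htδ => ?_⟩
      have hte : t = x := le_antisymm (ht.2.trans hx1) hxt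
      subst hte
      simp only [Set.Icc_self]
      rw [eVariationOn.subsingleton γ (Set.subsingleton_singleton)]
      simpa using hε2.le
  -- left bound
  obtain ⟨δ₂, hδ₂, hL⟩ : ∃ δ₂ > 0, ∀ t ∈ Icc (0:ℝ) 1, t ≤ x → x - t < δ₂ →
      (eVariationOn γ (Icc t x)).toReal ≤ ε/2 := by
    rcases lt_or_ge 0 x with hx0 | hx0
    · obtain ⟨tm, htm, hv⟩ := evar_left hγ hfin ⟨hx0, hx.2⟩ hε2
      refine ⟨x - tm, by linarith [htm.2], fun t ht htx htδ => ?_⟩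
      have : eVariationOn γ (Icc t x) ≤ ENNReal.ofReal (ε/2) :=
        le_trans (eVariationOn.mono γ (Icc_subset_Icc (by linarith) le_rfl)) hv
      calc (eVariationOn γ (Icc t x)).toReal
          ≤ (ENNReal.ofReal (ε/2)).toReal := ENNReal.toReal_mono ENNReal.ofReal_ne_top this
        _ = ε/2 := ENNReal.toReal_ofReal hε2.le
    · refine ⟨1, one_pos, fun t ht htx htδ => ?_⟩
      have hte : t = x := le_antisymm htx (hx0.trans ht.1)
      subst hte
      simp only [Set.Icc_self]
      rw [eVariationOn.subsingleton γ (Set.subsingleton_singleton)]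
      simpa using hε2.le
  refine ⟨min δ₁ δ₂, lt_min hδ₁ hδ₂, fun t ht htd => ?_⟩
  rw [Real.dist_eq] at htd
  rcases le_total x t with hxt | htx
  · have h1 : t - x < δ₁ := by
      have := abs_lt.mp (lt_of_lt_of_le htd (min_le_left _ _))
      linarith [this.2]
    have : h t = h x + (eVariationOn γ (Icc x t)).toReal := evar_diff hfin hx.1 hxt ht.2
    rw [Real.dist_eq, this]
    have := hR t ht hxt h1
    rw [abs_of_nonneg (by linarith [ENNReal.toReal_nonneg (a := eVariationOn γ (Icc x t))])]
    have h2 : (0:ℝ) ≤ (eVariationOn γ (Icc x t)).toReal := ENNReal.toReal_nonneg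
    linarith
  · have h1 : x - t < δ₂ := by
      have := abs_lt.mp (lt_of_lt_of_le htd (min_le_right _ _))
      linarith [this.1]
    have : h x = h t + (eVariationOn γ (Icc t x)).toReal := evar_diff hfin ht.1 htx hx.2
    rw [Real.dist_eq, this]
    have := hL t ht htx h1
    rw [abs_of_nonpos (by linarith [ENNReal.toReal_nonneg (a := eVariationOn γ (Icc t x))])]
    linarith


lemma sqrt_helper {l c : ℝ} (hl : 0 ≤ l) (hc : 0 ≤ c) :
    Real.sqrt ((l+c)^2 + Real.pi^2) ≤ Real.sqrt (l^2 + Real.pi^2) + c := by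
  set s := Real.sqrt (l^2 + Real.pi^2) with hs
  have hs0 : 0 ≤ s := Real.sqrt_nonneg _
  have hs2 : s^2 = l^2 + Real.pi^2 := Real.sq_sqrt (by positivity)
  have hls : l ≤ s := by nlinarith [sq_nonneg (s - l), sq_nonneg (s + l), Real.pi_pos]
  calc Real.sqrt ((l+c)^2 + Real.pi^2) ≤ Real.sqrt ((s+c)^2) := by
        apply Real.sqrt_le_sqrt; nlinarith
    _ = s + c := Real.sqrt_sq (by linarith)


set_option maxHeartbeats 1000000 in
/-- For a path connected compact metric space `X` with base point `ξ`, and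
`X × S¹` equipped with the metric `dist((x,t),(y,s)) = √(d(x,y)² + |t−s|²)` (the `ℓ²`-product
metric, realized as `WithLp 2 (X × S¹)`), one has
`L(X × S¹, (ξ,1)) ≤ √(L(X,ξ)² + π²)`. -/
theorem universal_homotopy_length_prod_circle
    {X : Type*} [MetricSpace X] [CompactSpace X] [PathConnectedSpace X] (ξ : X) :
    (⨆ z : WithLp 2 (X × ↥(Metric.sphere (0 : ℂ) 1)),
        pathEDist
          ((WithLp.equiv 2 (X × ↥(Metric.sphere (0 : ℂ) 1))).symm (ξ, ⟨1, by simp⟩)) z)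
      ≤ ((⨆ y : X, pathEDist ξ y) ^ 2 + ENNReal.ofReal Real.pi ^ 2) ^ (1/2 : ℝ) := by
  classical
  set S1 := Metric.sphere (0 : ℂ) 1
  set L := ⨆ y : X, pathEDist ξ y with hL
  by_cases hLtop : L = ⊤
  · rw [hLtop]
    have : ((⊤:ℝ≥0∞) ^ 2 + ENNReal.ofReal Real.pi ^ 2) ^ (1/2 : ℝ) = ⊤ := by
      rw [ENNReal.top_pow (by norm_num), top_add, ENNReal.top_rpow_of_pos (by norm_num)]
    rw [this]
    exact le_top
  set l := L.toReal with hl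
  have hl0 : 0 ≤ l := ENNReal.toReal_nonneg
  -- rewrite RHS as ofReal
  have hRHS : ((L) ^ 2 + ENNReal.ofReal Real.pi ^ 2) ^ (1/2 : ℝ)
      = ENNReal.ofReal (Real.sqrt (l^2 + Real.pi^2)) := by
    rw [← ENNReal.ofReal_toReal hLtop, ← hl, ← ENNReal.ofReal_pow hl0,
      ← ENNReal.ofReal_pow Real.pi_pos.le,
      ← ENNReal.ofReal_add (by positivity) (by positivity),
      ENNReal.ofReal_rpow_of_nonneg (by positivity) (by norm_num),
      Real.sqrt_eq_rpow]
  rw [hRHS]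
  apply ENNReal.le_of_forall_pos_le_add
  intro ε' hε' _
  apply iSup_le
  intro z
  set y : X := z.fst with hy
  set sz : S1 := z.snd with hsz
  set θ : ℝ := Complex.arg (sz : ℂ) with hθ
  have hθpi : |θ| ≤ Real.pi := Complex.abs_arg_le_pi _
  set εr : ℝ := (ε' : ℝ)/2 with hεr
  have hεr0 : 0 < εr := by
    have : (0:ℝ) < ε' := hε'
    rw [hεr]; linarith
  -- choose a path γ in X from ξ to y with variation close to the infimum
  have hPD : pathEDist ξ y ≤ L := le_iSup (fun y => pathEDist ξ y) y
  have hPDfin : pathEDist ξ y ≠ ⊤ := ne_top_of_le_ne_top hLtop hPD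
  have hPDlt : pathEDist ξ y < pathEDist ξ y + ENNReal.ofReal εr :=
    ENNReal.lt_add_right hPDfin (by simp [hεr0])
  obtain ⟨γ, hγS, hγv⟩ : ∃ γ ∈ {γ : ℝ → X | ContinuousOn γ (Set.Icc 0 1) ∧ γ 0 = ξ ∧ γ 1 = y},
      eVariationOn γ (Set.Icc 0 1) < pathEDist ξ y + ENNReal.ofReal εr := by
    have := hPDlt
    rw [pathEDist] at this
    conv_lhs at this => rw [iInf_subtype']
    rw [iInf_lt_iff] at this
    obtain ⟨⟨γ, hγ⟩, h⟩ := this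
    exact ⟨γ, hγ, by simpa [pathEDist] using h⟩
  obtain ⟨hγcont, hγ0, hγ1⟩ := hγS
  have hVfin : eVariationOn γ (Icc 0 1) ≠ ⊤ := by
    have h2 : pathEDist ξ y + ENNReal.ofReal εr ≠ ⊤ := by
      simp [ENNReal.add_ne_top, hPDfin]
    exact ne_top_of_le_ne_top h2 hγv.le
  -- the variation function and its properties
  set h : ℝ → ℝ := fun t => (eVariationOn γ (Icc 0 t)).toReal with hhdef
  set V : ℝ := h 1 with hV
  have hV0 : 0 ≤ V := ENNReal.toReal_nonneg
  have hVl : V ≤ l + εr := by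
    have h1 : eVariationOn γ (Icc 0 1) ≤ L + ENNReal.ofReal εr :=
      hγv.le.trans (add_le_add hPD le_rfl)
    have h2 : (L + ENNReal.ofReal εr).toReal = l + εr := by
      rw [ENNReal.toReal_add hLtop ENNReal.ofReal_ne_top, ENNReal.toReal_ofReal hεr0.le]
    calc V ≤ (L + ENNReal.ofReal εr).toReal :=
          ENNReal.toReal_mono (by simp [ENNReal.add_ne_top, hLtop]) h1
      _ = l + εr := h2
  have hgap : ∀ a b : ℝ, 0 ≤ a → a ≤ b → b ≤ 1 →
      h a ≤ h b ∧ dist (γ a) (γ b) ≤ h b - h a := by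
    intro a b ha hab hb1
    have hdiff := evar_diff hVfin ha hab hb1
    have hfab : eVariationOn γ (Icc a b) ≠ ⊤ :=
      ne_top_of_le_ne_top hVfin (eVariationOn.mono γ (Icc_subset_Icc ha hb1))
    have hd : dist (γ a) (γ b) ≤ (eVariationOn γ (Icc a b)).toReal := by
      rw [dist_edist]
      exact ENNReal.toReal_mono hfab
        (eVariationOn.edist_le γ ⟨le_refl a, hab⟩ ⟨hab, le_refl b⟩)
    constructor
    · rw [hhdef]; dsimp only; rw [show (eVariationOn γ (Icc 0 b)).toReal =
        (eVariationOn γ (Icc 0 a)).toReal + (eVariationOn γ (Icc a b)).toReal from hdiff]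
      simpa using ENNReal.toReal_nonneg
    · have : h b - h a = (eVariationOn γ (Icc a b)).toReal := by
        rw [hhdef]; dsimp only; rw [hdiff]; ring
      rw [this]; exact hd
  have hh0 : h 0 = 0 := by
    rw [hhdef]; dsimp only; rw [Icc_self, eVariationOn.subsingleton γ subsingleton_singleton]
    simp
  set W : ℝ := V + εr with hW
  have hW0 : 0 < W := by rw [hW]; linarith
  set φ : ℝ → ℝ := fun t => (h t + εr * t)/W with hφ
  set B : ℝ := Real.sqrt (W^2 + Real.pi^2) with hB
  have hB0 : 0 ≤ B := Real.sqrt_nonneg _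
  have hB2 : B^2 = W^2 + Real.pi^2 := Real.sq_sqrt (by positivity)
  -- the circle path
  set c' : ℝ → ℂ := fun t => circleMap 0 1 (θ * φ t) with hc'
  have hc'mem : ∀ t, c' t ∈ S1 := fun t => circleMap_mem_sphere 0 one_pos.le _
  set cpath : ℝ → S1 := fun t => (⟨c' t, hc'mem t⟩ : S1) with hcpath
  set δ : ℝ → WithLp 2 (X × S1) := fun t => (WithLp.equiv 2 (X × ↥S1)).symm (γ t, cpath t)
    with hδ
  -- continuity
  have hhcont : ContinuousOn h (Icc 0 1) := continuousOn_evar_toReal hγcont hVfin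
  have hφcont : ContinuousOn φ (Icc 0 1) :=
    (hhcont.add ((continuous_const.mul continuous_id).continuousOn)).div_const W
  have hc'cont : ContinuousOn c' (Icc 0 1) :=
    (continuous_circleMap 0 1).comp_continuousOn (continuousOn_const.mul hφcont)
  have hccont : ContinuousOn cpath (Icc 0 1) := by
    rw [hcpath, Topology.IsInducing.subtypeVal.continuousOn_iff]
    exact hc'cont
  have hδcont : ContinuousOn δ (Icc 0 1) :=
    (WithLp.prod_continuous_toLp 2 X ↥S1).comp_continuousOn (hγcont.prodMk hccont)
  -- endpoints
  have habs_sz : ‖(sz : ℂ)‖ = 1 := by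
    have := sz.2
    simpa [Complex.dist_eq, S1] using this
  have hδ0 : δ 0 = (WithLp.equiv 2 (X × ↥S1)).symm (ξ, ⟨1, by simp [S1]⟩) := by
    rw [hδ]; dsimp only
    congr 1
    refine Prod.ext hγ0 (Subtype.ext ?_)
    show c' 0 = 1
    rw [hc']; dsimp only
    rw [hφ]; dsimp only
    rw [hh0]
    simp [circleMap]
  have hδ1 : δ 1 = z := by
    rw [hδ]; dsimp only
    have hc1 : cpath 1 = sz := by
      refine Subtype.ext ?_
      show c' 1 = (sz : ℂ)
      rw [hc']; dsimp only
      rw [hφ]; dsimp only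
      rw [show (h 1 + εr * 1)/W = 1 by rw [mul_one, ← hW]; field_simp]
      rw [mul_one]
      show (0:ℂ) + 1 * Complex.exp (θ * Complex.I) = (sz : ℂ)
      rw [zero_add, one_mul, hθ]
      have := Complex.norm_mul_exp_arg_mul_I (sz : ℂ)
      rw [habs_sz] at this
      simpa using this
    rw [hγ1, hc1]
    rfl
  -- the per-step estimate
  have hkey : ∀ a b : ℝ, a ∈ Icc (0:ℝ) 1 → b ∈ Icc (0:ℝ) 1 → a ≤ b →
      dist (δ b) (δ a) ≤ (B/W) * ((h b - h a) + εr * (b - a)) := by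
    intro a b ha hb hab
    set Δ : ℝ := (h b - h a) + εr * (b - a) with hΔ
    obtain ⟨hmono, hdX⟩ := hgap a b ha.1 hab hb.2
    clear_value Δ B W V εr
    have hΔ0 : 0 ≤ Δ := by rw [hΔ]; nlinarith
    have hdX' : dist (γ b) (γ a) ≤ Δ := by
      rw [dist_comm]; rw [hΔ]; nlinarith
    have hdC : dist (cpath b) (cpath a) ≤ Real.pi * Δ / W := by
      rw [Subtype.dist_eq]
      have hlip := (lipschitzWith_circleMap (0:ℂ) 1).dist_le_mul (θ * φ b) (θ * φ a)
      have : dist (c' b) (c' a) ≤ |θ| * |φ b - φ a| := by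
        calc dist (c' b) (c' a) ≤ (Real.nnabs 1 : ℝ) * dist (θ * φ b) (θ * φ a) := hlip
          _ = |θ| * |φ b - φ a| := by
              rw [Real.coe_nnabs, abs_one, one_mul, Real.dist_eq, ← mul_sub, abs_mul]
      refine this.trans ?_
      have hφd : |φ b - φ a| = Δ / W := by
        rw [hφ]; dsimp only
        rw [div_sub_div_same, abs_div, abs_of_pos hW0]
        congr 1
        rw [abs_of_nonneg (by rw [hΔ] at hΔ0; linarith)]
        rw [hΔ]; ring
      rw [hφd]
      calc |θ| * (Δ / W) ≤ Real.pi * (Δ / W) :=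
            mul_le_mul_of_nonneg_right hθpi (by positivity)
        _ = Real.pi * Δ / W := by ring
    -- product distance
    have hprod : dist (δ b) (δ a)
        = (dist (γ b) (γ a) ^ (2:ℝ) + dist (cpath b) (cpath a) ^ (2:ℝ)) ^ ((1:ℝ)/2) := by
      have := WithLp.prod_dist_eq_add (p := 2) (by norm_num) (δ b) (δ a)
      simpa [hδ] using this
    rw [hprod]
    have hgoal : dist (γ b) (γ a) ^ (2:ℝ) + dist (cpath b) (cpath a) ^ (2:ℝ)
        ≤ ((B/W) * Δ)^2 := by
      rw [Real.rpow_two, Real.rpow_two]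
      have hc0 : 0 ≤ dist (cpath b) (cpath a) := dist_nonneg
      have hx0 : 0 ≤ dist (γ b) (γ a) := dist_nonneg
      have hπ : 0 < Real.pi := Real.pi_pos
      have expand : ((B/W) * Δ)^2 = (W^2 + Real.pi^2) * Δ^2 / W^2 := by
        rw [mul_pow, div_pow, hB2]; ring
      rw [expand]
      have h1 : dist (γ b) (γ a)^2 ≤ Δ^2 := pow_le_pow_left₀ hx0 hdX' 2
      have h2 : dist (cpath b) (cpath a)^2 ≤ Real.pi^2 * Δ^2 / W^2 := by
        calc dist (cpath b) (cpath a)^2 ≤ (Real.pi * Δ / W)^2 := pow_le_pow_left₀ hc0 hdC 2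
          _ = Real.pi^2 * Δ^2 / W^2 := by rw [div_pow, mul_pow]
      calc dist (γ b) (γ a)^2 + dist (cpath b) (cpath a)^2
          ≤ Δ^2 + Real.pi^2 * Δ^2 / W^2 := by linarith
        _ = (W^2 + Real.pi^2) * Δ^2 / W^2 := by field_simp
    calc (dist (γ b) (γ a) ^ (2:ℝ) + dist (cpath b) (cpath a) ^ (2:ℝ)) ^ ((1:ℝ)/2)
        = Real.sqrt (dist (γ b) (γ a) ^ (2:ℝ) + dist (cpath b) (cpath a) ^ (2:ℝ)) := by
          rw [Real.sqrt_eq_rpow]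
      _ ≤ Real.sqrt (((B/W) * Δ)^2) := Real.sqrt_le_sqrt hgoal
      _ = (B/W) * Δ := Real.sqrt_sq (by positivity)
  -- bound the variation of δ
  have hvarδ : eVariationOn δ (Icc 0 1) ≤ ENNReal.ofReal B := by
    apply iSup_le
    rintro ⟨n, ⟨u, hu, us⟩⟩
    dsimp only
    have hterm : ∀ i, i < n → edist (δ (u (i+1))) (δ (u i))
        = ENNReal.ofReal (dist (δ (u (i+1))) (δ (u i))) := fun i _ => edist_dist _ _
    calc ∑ i ∈ Finset.range n, edist (δ (u (i+1))) (δ (u i))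
        = ∑ i ∈ Finset.range n, ENNReal.ofReal (dist (δ (u (i+1))) (δ (u i))) := by
          apply Finset.sum_congr rfl
          intro i hi
          exact hterm i (Finset.mem_range.mp hi)
      _ = ENNReal.ofReal (∑ i ∈ Finset.range n, dist (δ (u (i+1))) (δ (u i))) :=
          (ENNReal.ofReal_sum_of_nonneg (fun i _ => dist_nonneg)).symm
      _ ≤ ENNReal.ofReal B := by
          apply ENNReal.ofReal_le_ofReal
          have hstep : ∀ i ∈ Finset.range n, dist (δ (u (i+1))) (δ (u i))
              ≤ (B/W) * ((h (u (i+1)) + εr * u (i+1)) - (h (u i) + εr * u i)) := by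
            intro i hi
            have := hkey (u i) (u (i+1)) (us i) (us (i+1)) (hu (by omega))
            calc dist (δ (u (i+1))) (δ (u i))
                ≤ (B/W) * ((h (u (i+1)) - h (u i)) + εr * (u (i+1) - u i)) := this
              _ = (B/W) * ((h (u (i+1)) + εr * u (i+1)) - (h (u i) + εr * u i)) := by ring
          calc ∑ i ∈ Finset.range n, dist (δ (u (i+1))) (δ (u i))
              ≤ ∑ i ∈ Finset.range n,
                  (B/W) * ((h (u (i+1)) + εr * u (i+1)) - (h (u i) + εr * u i)) :=
                Finset.sum_le_sum hstep
            _ = (B/W) * ((h (u n) + εr * u n) - (h (u 0) + εr * u 0)) := by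
                rw [← Finset.mul_sum, Finset.sum_range_sub (fun i => h (u i) + εr * u i)]
            _ ≤ (B/W) * W := by
                apply mul_le_mul_of_nonneg_left _ (by positivity)
                have h1 : h (u n) ≤ V := (hgap (u n) 1 (us n).1 (us n).2 le_rfl).1
                have h2 : 0 ≤ h (u 0) := ENNReal.toReal_nonneg
                have h3 : u n ≤ 1 := (us n).2
                have h4 : 0 ≤ u 0 := (us 0).1
                rw [hW]
                nlinarith [hεr0]
            _ = B := by field_simp
  -- combine
  have hmem : δ ∈ {p : ℝ → WithLp 2 (X × ↥S1) | ContinuousOn p (Set.Icc 0 1) ∧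
      p 0 = (WithLp.equiv 2 (X × ↥S1)).symm (ξ, ⟨1, by simp [S1]⟩) ∧ p 1 = z} :=
    ⟨hδcont, hδ0, hδ1⟩
  have hle : pathEDist ((WithLp.equiv 2 (X × ↥S1)).symm (ξ, ⟨1, by simp [S1]⟩)) z
      ≤ eVariationOn δ (Icc 0 1) := by
    rw [pathEDist]
    exact iInf₂_le δ hmem
  refine hle.trans (hvarδ.trans ?_)
  -- B ≤ sqrt(l² + π²) + ε'
  have hBle : B ≤ Real.sqrt (l^2 + Real.pi^2) + (ε' : ℝ) := by
    have h1 : B ≤ Real.sqrt ((l + 2*εr)^2 + Real.pi^2) := by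
      rw [hB]
      apply Real.sqrt_le_sqrt
      have : W ≤ l + 2*εr := by rw [hW]; linarith
      nlinarith [hW0.le]
    have h2 : Real.sqrt ((l + 2*εr)^2 + Real.pi^2) ≤ Real.sqrt (l^2 + Real.pi^2) + 2*εr :=
      sqrt_helper hl0 (by linarith)
    have h3 : 2*εr = (ε' : ℝ) := by rw [hεr]; ring
    linarith
  calc ENNReal.ofReal B ≤ ENNReal.ofReal (Real.sqrt (l^2 + Real.pi^2) + (ε' : ℝ)) :=
        ENNReal.ofReal_le_ofReal hBle
    _ ≤ ENNReal.ofReal (Real.sqrt (l^2 + Real.pi^2)) + ENNReal.ofReal (ε' : ℝ) :=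
        ENNReal.ofReal_add_le
    _ = ENNReal.ofReal (Real.sqrt (l^2 + Real.pi^2)) + (ε' : ℝ≥0∞) := by
        rw [ENNReal.ofReal_coe_nnreal]
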